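/- Let n, m, k be positive integers such that 1 < m < n, k = n − m, b = n − m + 1, and a = m·(n−m+1)/n is an integer. Then there exists an (a,b)-regular bipartite graph of order (n,m) that is NOT k-critical bipartite if and only if a < m − 1. -/

import Mathlib

/-- A bipartite graph of order `(n,m)` (with `n > m`), given by its adjacency relation
`E : Fin n → Fin m → Prop`, is `k`-critical bipartite (for `k = n − m`) if for every subset
`U'` of the larger color class with `|U'| = m`, the induced subgraph `G[U',V]` has a perfect
matching, i.e. there is an injection `f : V → U'` with `f v` adjacent to `v` for all `v`. -/
def IsKCriticalBipartite (n m : ℕ) (E : Fin n → Fin m → Prop) : Prop :=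
  ∀ U' : Finset (Fin n), U'.card = m →
    ∃ f : Fin m → Fin n, Function.Injective f ∧ ∀ v : Fin m, f v ∈ U' ∧ E (f v) v

def dd (a b u : ℕ) : ℕ := if u < b then a - 2 else a

def ss (a b x : ℕ) : ℕ := a * x - 2 * min x b

lemma ss_succ (a b x : ℕ) (ha2 : 2 ≤ a) : ss a b (x + 1) = ss a b x + dd a b x := by
  have h2 : 2 * x ≤ a * x := Nat.mul_le_mul_right x ha2
  unfold ss dd
  by_cases hx : x < b
  · rw [min_eq_left (by omega : x + 1 ≤ b), min_eq_left (le_of_lt hx), if_pos hx, Nat.mul_succ]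
    generalize a * x = A at h2 ⊢
    omega
  · rw [min_eq_right (by omega : b ≤ x + 1), min_eq_right (by omega : b ≤ x), if_neg hx,
      Nat.mul_succ]
    generalize a * x = A at h2 ⊢
    omega

lemma ss_mono (a b : ℕ) (ha2 : 2 ≤ a) : Monotone (ss a b) :=
  monotone_nat_of_le_succ fun x => by rw [ss_succ a b x ha2]; exact Nat.le_add_right _ _

lemma ss_gap (a b u u' : ℕ) (ha2 : 2 ≤ a) (h : u < u') :
    ss a b u + dd a b u ≤ ss a b u' := by
  rw [← ss_succ a b u ha2]
  exact ss_mono a b ha2 h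


lemma aux_card_mod (q c w : ℕ) (hw : w < q) :
    ((Finset.range (q * c)).filter (fun x => x % q = w)).card = c := by
  have hq : 0 < q := lt_of_le_of_lt (Nat.zero_le w) hw
  have himg : (Finset.range (q*c)).filter (fun x => x % q = w)
      = (Finset.range c).image (fun i => w + q * i) := by
    ext x
    simp only [Finset.mem_filter, Finset.mem_range, Finset.mem_image]
    constructor
    · rintro ⟨hx, hm⟩
      refine ⟨x / q, Nat.div_lt_of_lt_mul hx, ?_⟩
      conv_rhs => rw [← Nat.mod_add_div x q]
      rw [hm]
    · rintro ⟨i, hi, rfl⟩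
      refine ⟨?_, ?_⟩
      · calc w + q*i < q + q*i := by omega
          _ = q*(i+1) := by ring
          _ ≤ q*c := Nat.mul_le_mul_left q hi
      · rw [Nat.add_mul_mod_self_left, Nat.mod_eq_of_lt hw]
  rw [himg, Finset.card_image_of_injective _ (fun i j h => by
    have : q * i = q * j := by omega
    exact Nat.eq_of_mul_eq_mul_left hq this), Finset.card_range]

lemma aux_card_ge (n c : ℕ) :
    ((Finset.univ : Finset (Fin n)).filter (fun u => c ≤ u.val)).card = n - c := by
  classical
  have h := Finset.card_filter_add_card_filter_not
    (s := (Finset.univ : Finset (Fin n))) (p := fun u : Fin n => u.val < c)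
  have h2 : ((Finset.univ : Finset (Fin n)).filter (fun u => ¬ u.val < c))
      = (Finset.univ : Finset (Fin n)).filter (fun u => c ≤ u.val) := by
    apply Finset.filter_congr; intro u _; simp only [not_lt]
  by_cases hc : c ≤ n
  · have h3 : ((Finset.univ : Finset (Fin n)).filter (fun u => u.val < c)).card = c := by
      rw [← Finset.card_range c]
      apply Finset.card_nbij (fun u => u.val)
      · intro u hu; simp only [Finset.mem_coe, Finset.mem_filter] at hu; simpa using hu.2
      · intro u _ u' _ hh; exact Fin.ext hh
      · intro j hj
        simp only [Finset.coe_range, Set.mem_Iio] at hj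
        refine ⟨⟨j, lt_of_lt_of_le hj hc⟩, ?_, rfl⟩
        simp [hj]
    rw [h2] at h
    simp only [Finset.card_univ, Fintype.card_fin] at h
    omega
  · rw [Finset.filter_eq_empty_iff.mpr (by intro u _; simp; omega)]
    simp; omega

lemma aux_card_lt (n c : ℕ) (hc : c ≤ n) :
    ((Finset.univ : Finset (Fin n)).filter (fun u => u.val < c)).card = c := by
  classical
  have h := Finset.card_filter_add_card_filter_not
    (s := (Finset.univ : Finset (Fin n))) (p := fun u : Fin n => u.val < c)
  have h2 : ((Finset.univ : Finset (Fin n)).filter (fun u => ¬ u.val < c))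
      = (Finset.univ : Finset (Fin n)).filter (fun u => c ≤ u.val) := by
    apply Finset.filter_congr; intro u _; simp only [not_lt]
  rw [h2, aux_card_ge] at h
  simp only [Finset.card_univ, Fintype.card_fin] at h
  omega

lemma aux_row (n m : ℕ) (E : Finset (Fin n × Fin m)) (u : Fin n) :
    (E.filter (fun e => e.1 = u)).card
      = (Finset.univ.filter (fun v : Fin m => (u, v) ∈ E)).card := by
  apply Finset.card_nbij (fun e => e.2)
  · intro e he
    simp only [Finset.mem_coe, Finset.mem_filter] at he ⊢
    exact ⟨Finset.mem_univ _, by rw [← he.2]; exact he.1⟩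
  · intro e he e' he' hh
    simp only [Finset.coe_filter, Set.mem_setOf_eq] at he he'
    exact Prod.ext (he.2.trans he'.2.symm) hh
  · intro v hv
    simp only [Finset.coe_filter, Set.mem_setOf_eq, Finset.mem_univ, true_and] at hv
    exact ⟨(u, v), by simp [hv], rfl⟩

lemma aux_col (n m : ℕ) (E : Finset (Fin n × Fin m)) (v : Fin m) :
    (E.filter (fun e => e.2 = v)).card
      = (Finset.univ.filter (fun u : Fin n => (u, v) ∈ E)).card := by
  apply Finset.card_nbij (fun e => e.1)
  · intro e he
    simp only [Finset.mem_coe, Finset.mem_filter] at he ⊢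
    exact ⟨Finset.mem_univ _, by rw [← he.2]; exact he.1⟩
  · intro e he e' he' hh
    simp only [Finset.coe_filter, Set.mem_setOf_eq] at he he'
    exact Prod.ext hh (he.2.trans he'.2.symm)
  · intro u hu
    simp only [Finset.coe_filter, Set.mem_setOf_eq, Finset.mem_univ, true_and] at hu
    exact ⟨(u, v), by simp [hu], rfl⟩

lemma critical_aux (n m : ℕ) (hm : 1 < m) (hmn : m < n) (E : Finset (Fin n × Fin m))
    (hrow : ∀ u : Fin n, (Finset.univ.filter (fun v : Fin m => (u, v) ∈ E)).card = m - 1)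
    (hcol : ∀ v : Fin m, (Finset.univ.filter (fun u : Fin n => (u, v) ∈ E)).card = n - m + 1) :
    IsKCriticalBipartite n m (fun u v => (u, v) ∈ E) := by
  classical
  intro U' hU'
  have key : ∀ A : Finset (Fin m),
      A.card ≤ (A.biUnion (fun v => U'.filter (fun u => (u, v) ∈ E))).card := by
    intro A
    rcases Nat.lt_or_ge A.card 2 with hA | hA
    · rcases Nat.lt_or_ge A.card 1 with hA0 | hA1
      · have h0 : A.card = 0 := by omega
        simp [h0]
      · have h1 : A.card = 1 := by omega
        obtain ⟨v, hv⟩ := Finset.card_eq_one.mp h1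
        have hsplit := Finset.card_filter_add_card_filter_not
          (s := U') (p := fun u => (u, v) ∈ E)
        have hsub : (U'.filter (fun u => ¬ (u, v) ∈ E)).card
            ≤ ((Finset.univ : Finset (Fin n)).filter (fun u => ¬ (u, v) ∈ E)).card :=
          Finset.card_le_card (Finset.filter_subset_filter _ (Finset.subset_univ _))
        have hsplit2 := Finset.card_filter_add_card_filter_not
          (s := (Finset.univ : Finset (Fin n))) (p := fun u => (u, v) ∈ E)
        rw [hcol v] at hsplit2
        simp only [Finset.card_univ, Fintype.card_fin] at hsplit2
        have hpos : 1 ≤ (U'.filter (fun u => (u, v) ∈ E)).card := by omega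
        rw [hv, Finset.singleton_biUnion]
        simpa using hpos
    · have hsub : U' ⊆ A.biUnion (fun v => U'.filter (fun u => (u, v) ∈ E)) := by
        intro u hu
        have hsplit := Finset.card_filter_add_card_filter_not
          (s := A) (p := fun v => (u, v) ∈ E)
        have hsub2 : (A.filter (fun v => ¬ (u, v) ∈ E)).card
            ≤ ((Finset.univ : Finset (Fin m)).filter (fun v => ¬ (u, v) ∈ E)).card :=
          Finset.card_le_card (Finset.filter_subset_filter _ (Finset.subset_univ _))
        have hsplit2 := Finset.card_filter_add_card_filter_not
          (s := (Finset.univ : Finset (Fin m))) (p := fun v => (u, v) ∈ E)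
        rw [hrow u] at hsplit2
        simp only [Finset.card_univ, Fintype.card_fin] at hsplit2
        have hpos : 0 < (A.filter (fun v => (u, v) ∈ E)).card := by omega
        obtain ⟨v, hv⟩ := Finset.card_pos.mp hpos
        simp only [Finset.mem_filter] at hv
        exact Finset.mem_biUnion.mpr ⟨v, hv.1, Finset.mem_filter.mpr ⟨hu, hv.2⟩⟩
      have h2 := Finset.card_le_card hsub
      rw [hU'] at h2
      have hAm : A.card ≤ m := by
        have := Finset.card_le_univ A
        simpa using this
      omega
  obtain ⟨f, hfinj, hf⟩ :=
    (Finset.all_card_le_biUnion_card_iff_exists_injective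
      (fun v => U'.filter (fun u => (u, v) ∈ E))).mp key
  refine ⟨f, hfinj, fun v => ?_⟩
  have := hf v
  simp only [Finset.mem_filter] at this
  exact this

lemma construction (n m a b : ℕ) (hm4 : 4 ≤ m) (hmn : m < n) (hb : b = n - m + 1)
    (hab : a * n = m * b) (ha2 : 2 ≤ a) (haq : a + 2 ≤ m) :
    ∃ E : Finset (Fin n × Fin m),
      (∀ u : Fin n, (E.filter (fun e => e.1 = u)).card = a) ∧
      (∀ v : Fin m, (E.filter (fun e => e.2 = v)).card = b) ∧
      ¬ IsKCriticalBipartite n m (fun u v => (u, v) ∈ E) := by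
  classical
  have hq0 : 0 < m - 2 := by omega
  have hbn : b ≤ n := by omega
  have hb2 : 2 ≤ b := by omega
  have hdle : ∀ u : ℕ, dd a b u ≤ m - 2 := by intro u; unfold dd; split_ifs <;> omega
  have hvm : ∀ t : ℕ, 2 + t % (m - 2) < m := fun t => by
    have := Nat.mod_lt t hq0; omega
  -- the parts of the edge set
  let vm : ℕ → Fin m := fun t => ⟨2 + t % (m - 2), hvm t⟩
  let fP : ((_ : Fin n) × ℕ) → Fin n × Fin m := fun p => (p.1, vm (ss a b p.1.val + p.2))
  let S : Finset ((_ : Fin n) × ℕ) :=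
    Finset.univ.sigma (fun u : Fin n => Finset.range (dd a b u.val))
  let P : Finset (Fin n × Fin m) := S.image fP
  let TW : Finset (Fin n × Fin m) :=
    (Finset.univ.filter (fun u : Fin n => u.val < b)) ×ˢ
      ({⟨0, by omega⟩, ⟨1, by omega⟩} : Finset (Fin m))
  have hmemS : ∀ p : (_ : Fin n) × ℕ, p ∈ S ↔ p.2 < dd a b p.1.val := by
    intro p
    simp [S, Finset.mem_sigma, Finset.mem_range]
  have hvmval : ∀ t, (vm t).val = 2 + t % (m - 2) := fun t => rfl
  -- injectivity of the pair map on S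
  have hvm_inj : ∀ u : Fin n, ∀ t t' : ℕ, t < dd a b u.val → t' < dd a b u.val →
      vm (ss a b u.val + t) = vm (ss a b u.val + t') → t = t' := by
    intro u t t' ht ht' hvv
    have h1 : (ss a b u.val + t) % (m - 2) = (ss a b u.val + t') % (m - 2) := by
      have := congrArg Fin.val hvv
      simp only [hvmval] at this
      omega
    have h2 : t % (m - 2) = t' % (m - 2) :=
      Nat.ModEq.add_left_cancel' (ss a b u.val) h1
    rw [Nat.mod_eq_of_lt (lt_of_lt_of_le ht (hdle u.val)),
      Nat.mod_eq_of_lt (lt_of_lt_of_le ht' (hdle u.val))] at h2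
    exact h2
  have hfPinj : Set.InjOn fP S := by
    rintro ⟨u, t⟩ h1 ⟨u', t'⟩ h2 heq
    rw [Finset.mem_coe, hmemS] at h1 h2
    have hu : u = u' := congrArg Prod.fst heq
    subst hu
    have : t = t' := by
      apply hvm_inj u t t' h1 h2
      exact congrArg Prod.snd heq
    rw [this]
  -- row cards of P
  have hProw : ∀ u : Fin n, (P.filter (fun e => e.1 = u)).card = dd a b u.val := by
    intro u
    have himg : P.filter (fun e => e.1 = u)
        = (Finset.range (dd a b u.val)).image (fun t => (u, vm (ss a b u.val + t))) := by
      ext e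
      simp only [P, S, fP, Finset.mem_filter, Finset.mem_image, Finset.mem_sigma,
        Finset.mem_range, Finset.mem_univ, true_and]
      constructor
      · rintro ⟨⟨p, hp, rfl⟩, hu⟩
        simp only at hu
        exact ⟨p.2, by rw [← hu]; exact hp, by rw [hu]⟩
      · rintro ⟨t, ht, rfl⟩
        exact ⟨⟨⟨u, t⟩, ht, rfl⟩, rfl⟩
    rw [himg, Finset.card_image_of_injOn, Finset.card_range]
    intro t ht t' ht' hh
    simp only [Finset.coe_range, Set.mem_Iio] at ht ht'
    exact hvm_inj u t t' ht ht' (congrArg Prod.snd hh)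
  -- row cards of TW
  have hTWrow : ∀ u : Fin n,
      (TW.filter (fun e => e.1 = u)).card = if u.val < b then 2 else 0 := by
    intro u
    by_cases hu : u.val < b
    · rw [if_pos hu]
      have : TW.filter (fun e => e.1 = u)
          = ({(u, ⟨0, by omega⟩), (u, ⟨1, by omega⟩)} : Finset (Fin n × Fin m)) := by
        ext ⟨x, y⟩
        simp only [TW, Finset.mem_filter, Finset.mem_product, Finset.mem_univ, true_and,
          Finset.mem_insert, Finset.mem_singleton, Prod.mk.injEq]
        constructor
        · rintro ⟨⟨hx, hy⟩, rfl⟩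
          rcases hy with hy | hy
          · exact Or.inl ⟨rfl, hy⟩
          · exact Or.inr ⟨rfl, hy⟩
        · rintro (⟨rfl, rfl⟩ | ⟨rfl, rfl⟩)
          · exact ⟨⟨hu, Or.inl rfl⟩, rfl⟩
          · exact ⟨⟨hu, Or.inr rfl⟩, rfl⟩
      rw [this]
      rw [Finset.card_insert_of_notMem (by simp [Prod.ext_iff, Fin.ext_iff]),
        Finset.card_singleton]
    · rw [if_neg hu]
      rw [Finset.filter_eq_empty_iff.mpr, Finset.card_empty]
      rintro ⟨x, y⟩ hxy
      simp only [TW, Finset.mem_product, Finset.mem_filter, Finset.mem_univ, true_and] at hxy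
      intro h
      apply hu
      rw [← h]
      exact hxy.1
  have hPsnd : ∀ e ∈ P, 2 ≤ e.2.val := by
    rintro e he
    simp only [P, Finset.mem_image] at he
    obtain ⟨p, _, rfl⟩ := he
    simp only [fP, hvmval]
    omega
  have hdisj : Disjoint TW P := by
    rw [Finset.disjoint_left]
    intro e heTW heP
    have h2 := hPsnd e heP
    simp only [TW, Finset.mem_product, Finset.mem_insert, Finset.mem_singleton] at heTW
    rcases heTW.2 with h | h <;> rw [h] at h2 <;> simp at h2
  -- row degrees of E
  have hrowE : ∀ u : Fin n, ((TW ∪ P).filter (fun e => e.1 = u)).card = a := by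
    intro u
    rw [Finset.filter_union, Finset.card_union_of_disjoint
      (Finset.disjoint_filter_filter hdisj), hTWrow u, hProw u]
    unfold dd
    split_ifs <;> omega
  -- ss at n
  have hssn : ss a b n = (m - 2) * b := by
    unfold ss
    rw [min_eq_right hbn, hab, ← Nat.sub_mul]
  -- injectivity of the index map on S
  have hphi_inj : Set.InjOn (fun p : (_ : Fin n) × ℕ => ss a b p.1.val + p.2) S := by
    rintro ⟨u, t⟩ h1 ⟨u', t'⟩ h2 heq
    rw [Finset.mem_coe, hmemS] at h1 h2
    dsimp only at h1 h2 heq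
    rcases lt_trichotomy u.val u'.val with h | h | h
    · have hg := ss_gap a b u.val u'.val ha2 h
      omega
    · have hu : u = u' := Fin.ext h
      subst hu
      have : t = t' := by omega
      rw [this]
    · have hg := ss_gap a b u'.val u.val ha2 h
      omega
  -- column cards of P are at most b
  have hPcol_le : ∀ v : Fin m, 2 ≤ v.val → (P.filter (fun e => e.2 = v)).card ≤ b := by
    intro v hv2
    have himg : P.filter (fun e => e.2 = v) = (S.filter (fun p => (fP p).2 = v)).image fP :=
      Finset.filter_image
    rw [himg, Finset.card_image_of_injOn
      (hfPinj.mono (by exact_mod_cast Finset.filter_subset _ S))]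
    have hwlt : v.val - 2 < m - 2 := by have := v.isLt; omega
    rw [← aux_card_mod (m - 2) b (v.val - 2) hwlt]
    apply Finset.card_le_card_of_injOn (fun p => ss a b p.1.val + p.2)
    · rintro ⟨u, t⟩ hp
      simp only [Finset.mem_coe, Finset.mem_filter] at hp
      obtain ⟨ht, hvv⟩ := hp
      rw [hmemS] at ht
      dsimp only at ht hvv ⊢
      have hval : (2 : ℕ) + (ss a b u.val + t) % (m - 2) = v.val := by
        have := congrArg Fin.val hvv
        simpa [fP, hvmval] using this
      simp only [Finset.mem_coe, Finset.mem_filter, Finset.mem_range]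
      constructor
      · have h1 : ss a b u.val + t < ss a b u.val + dd a b u.val := by omega
        have h2 : ss a b u.val + dd a b u.val ≤ ss a b n := ss_gap a b u.val n ha2 u.isLt
        omega
      · omega
    · exact hphi_inj.mono (by exact_mod_cast Finset.filter_subset _ S)
  -- total card of P
  have hPcard : P.card = (m - 2) * b := by
    have h1 : P.card = S.card := Finset.card_image_of_injOn hfPinj
    have h2 : S.card = ∑ u : Fin n, dd a b u.val := by
      simp [S, Finset.card_sigma]
    rw [h1, h2, ← Finset.sum_filter_add_sum_filter_not Finset.univ (fun u : Fin n => u.val < b)]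
    have hs1 : ∑ u ∈ Finset.univ.filter (fun u : Fin n => u.val < b), dd a b u.val
        = b * (a - 2) := by
      calc ∑ u ∈ Finset.univ.filter (fun u : Fin n => u.val < b), dd a b u.val
          = ∑ _u ∈ Finset.univ.filter (fun u : Fin n => u.val < b), (a - 2) :=
            Finset.sum_congr rfl (fun u hu => by
              simp only [Finset.mem_filter] at hu
              unfold dd
              rw [if_pos hu.2])
        _ = b * (a - 2) := by rw [Finset.sum_const, aux_card_lt n b hbn, smul_eq_mul]
    have hs2 : ∑ u ∈ Finset.univ.filter (fun u : Fin n => ¬ u.val < b), dd a b u.val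
        = (n - b) * a := by
      calc ∑ u ∈ Finset.univ.filter (fun u : Fin n => ¬ u.val < b), dd a b u.val
          = ∑ _u ∈ Finset.univ.filter (fun u : Fin n => ¬ u.val < b), a :=
            Finset.sum_congr rfl (fun u hu => by
              simp only [Finset.mem_filter, not_lt] at hu
              unfold dd
              rw [if_neg (by omega)])
        _ = (n - b) * a := by
            rw [Finset.sum_const, smul_eq_mul,
              show (Finset.univ.filter (fun u : Fin n => ¬ u.val < b))
                  = Finset.univ.filter (fun u : Fin n => b ≤ u.val) from
                Finset.filter_congr (fun u _ => by simp only [not_lt]),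
              aux_card_ge n b]
    rw [hs1, hs2]
    -- arithmetic: b * (a-2) + (n-b) * a = (m-2) * b
    have hnz : (n : ℤ) = (b : ℤ) + (m : ℤ) - 1 := by
      have : n + 1 = b + m := by omega
      have := congrArg (fun x : ℕ => (x : ℤ)) this
      push_cast at this
      linarith
    have hz : (a : ℤ) * n = (m : ℤ) * b := by exact_mod_cast hab
    zify [ha2, hbn, (by omega : 2 ≤ m)]
    linear_combination hz
  -- P columns with v.val < 2 are empty
  have hPcol0 : ∀ v : Fin m, v.val < 2 → P.filter (fun e => e.2 = v) = ∅ := by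
    intro v hv
    rw [Finset.filter_eq_empty_iff]
    intro e he hev
    have h2 := hPsnd e he
    rw [hev] at h2
    omega
  -- exact column cards of P for v.val ≥ 2
  have hPcol : ∀ v : Fin m, 2 ≤ v.val → (P.filter (fun e => e.2 = v)).card = b := by
    have hfib : P.card = ∑ v : Fin m, (P.filter (fun e => e.2 = v)).card :=
      Finset.card_eq_sum_card_fiberwise (fun e _ => Finset.mem_univ e.2)
    rw [← Finset.sum_filter_add_sum_filter_not Finset.univ (fun v : Fin m => v.val < 2)] at hfib
    have hzero : ∑ v ∈ Finset.univ.filter (fun v : Fin m => v.val < 2),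
        (P.filter (fun e => e.2 = v)).card = 0 := by
      apply Finset.sum_eq_zero
      intro v hv
      simp only [Finset.mem_filter] at hv
      rw [hPcol0 v hv.2, Finset.card_empty]
    rw [hzero, zero_add, hPcard] at hfib
    have hqcard : (Finset.univ.filter (fun v : Fin m => ¬ v.val < 2)).card = m - 2 := by
      rw [show (Finset.univ.filter (fun v : Fin m => ¬ v.val < 2))
          = Finset.univ.filter (fun v : Fin m => 2 ≤ v.val) from
        Finset.filter_congr (fun v _ => by simp only [not_lt]), aux_card_ge]
    intro v hv
    by_contra hne
    have hlt : (P.filter (fun e => e.2 = v)).card < b :=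
      lt_of_le_of_ne (hPcol_le v hv) hne
    have hmem : v ∈ Finset.univ.filter (fun v : Fin m => ¬ v.val < 2) := by
      simp only [Finset.mem_filter, not_lt]
      exact ⟨Finset.mem_univ v, hv⟩
    have hsumlt : ∑ v' ∈ Finset.univ.filter (fun v : Fin m => ¬ v.val < 2),
        (P.filter (fun e => e.2 = v')).card
        < ∑ _v' ∈ Finset.univ.filter (fun v : Fin m => ¬ v.val < 2), b :=
      Finset.sum_lt_sum
        (fun i hi => hPcol_le i
          (by simp only [Finset.mem_filter, not_lt] at hi; exact hi.2))
        ⟨v, hmem, hlt⟩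
    rw [Finset.sum_const, smul_eq_mul, hqcard] at hsumlt
    omega
  -- TW columns
  have hTWcol : ∀ v : Fin m,
      (TW.filter (fun e => e.2 = v)).card = if v.val < 2 then b else 0 := by
    intro v
    by_cases hv : v.val < 2
    · rw [if_pos hv]
      have heq : TW.filter (fun e => e.2 = v)
          = (Finset.univ.filter (fun u : Fin n => u.val < b)) ×ˢ ({v} : Finset (Fin m)) := by
        ext ⟨x, y⟩
        simp only [TW, Finset.mem_filter, Finset.mem_product, Finset.mem_insert,
          Finset.mem_singleton, Finset.mem_univ, true_and]
        constructor
        · rintro ⟨⟨hx, _⟩, rfl⟩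
          exact ⟨hx, rfl⟩
        · rintro ⟨hx, hyv⟩
          refine ⟨⟨hx, ?_⟩, hyv⟩
          rw [hyv]
          rcases Nat.lt_or_ge v.val 1 with h1 | h1
          · left; exact Fin.ext (show v.val = 0 by omega)
          · right; exact Fin.ext (show v.val = 1 by omega)
      rw [heq, Finset.card_product, Finset.card_singleton, aux_card_lt n b hbn, mul_one]
    · rw [if_neg hv]
      rw [Finset.filter_eq_empty_iff.mpr, Finset.card_empty]
      intro e he hev
      simp only [TW, Finset.mem_product, Finset.mem_insert, Finset.mem_singleton] at he
      rcases he.2 with h | h <;>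
        (rw [hev] at h; have := congrArg Fin.val h; simp at this; omega)
  -- columns of E
  have hcolE : ∀ v : Fin m, ((TW ∪ P).filter (fun e => e.2 = v)).card = b := by
    intro v
    rw [Finset.filter_union, Finset.card_union_of_disjoint
      (Finset.disjoint_filter_filter hdisj), hTWcol v]
    by_cases hv : v.val < 2
    · rw [if_pos hv, hPcol0 v hv, Finset.card_empty]
      omega
    · rw [if_neg hv, hPcol v (by omega)]
      omega
  -- non-criticality
  have hnotcrit : ¬ IsKCriticalBipartite n m (fun u v => (u, v) ∈ TW ∪ P) := by
    intro hcrit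
    have hn0 : 0 < n := by omega
    have hnotmem : (⟨0, hn0⟩ : Fin n) ∉ Finset.univ.filter (fun u : Fin n => b ≤ u.val) := by
      simp only [Finset.mem_filter, Finset.mem_univ, true_and]
      omega
    have hU'card : (insert (⟨0, hn0⟩ : Fin n)
        (Finset.univ.filter (fun u : Fin n => b ≤ u.val))).card = m := by
      rw [Finset.card_insert_of_notMem hnotmem, aux_card_ge]
      omega
    obtain ⟨f, hfinj, hfv⟩ := hcrit _ hU'card
    have hkey : ∀ v : Fin m, v.val < 2 → f v = ⟨0, hn0⟩ := by
      intro v hv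
      obtain ⟨hmem, hadj⟩ := hfv v
      rcases Finset.mem_union.mp hadj with h | h
      · simp only [TW, Finset.mem_product, Finset.mem_filter, Finset.mem_univ, true_and] at h
        have hvb : (f v).val < b := h.1
        rcases Finset.mem_insert.mp hmem with h0 | h0
        · exact h0
        · simp only [Finset.mem_filter, Finset.mem_univ, true_and] at h0
          omega
      · have h2 := hPsnd _ h
        simp only at h2
        omega
    have h01 : (⟨0, by omega⟩ : Fin m) = (⟨1, by omega⟩ : Fin m) := by
      apply hfinj
      rw [hkey ⟨0, by omega⟩ (by simp), hkey ⟨1, by omega⟩ (by simp)]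
    have := congrArg Fin.val h01
    simp at this
  exact ⟨TW ∪ P, hrowE, hcolE, hnotcrit⟩

/-- **Theorem (main_negative).** Let `n, m, k` be positive integers such that `1 < m < n`,
`k = n − m`, `b = n − m + 1`, and `a = m·(n−m+1)/n` is an integer. Then there exists an
`(a,b)`-regular bipartite graph of order `(n,m)` that is NOT `k`-critical bipartite
if and only if `a < m − 1`. -/
theorem stmt_16 (n m k a b : ℕ) (hm : 1 < m) (hmn : m < n)
    (hk : k = n - m) (hb : b = n - m + 1) (ha : a * n = m * (n - m + 1)) :
    (∃ E : Finset (Fin n × Fin m),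
      (∀ u : Fin n, (E.filter (fun e => e.1 = u)).card = a) ∧
      (∀ v : Fin m, (E.filter (fun e => e.2 = v)).card = b) ∧
      ¬ IsKCriticalBipartite n m (fun u v => (u, v) ∈ E)) ↔ a < m - 1 := by
  classical
  constructor
  · rintro ⟨E, hrow, hcol, hnc⟩
    by_contra hge
    push_neg at hge
    have h1 : a * n < m * n := by
      rw [ha]
      exact mul_lt_mul_of_pos_left (by omega) (by omega)
    have ham : a < m := lt_of_mul_lt_mul_right h1 (Nat.zero_le n)
    have haeq : a = m - 1 := by omega
    apply hnc
    apply critical_aux n m hm hmn E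
    · intro u
      rw [← aux_row n m E u, hrow u, haeq]
    · intro v
      rw [← aux_col n m E v, hcol v, hb]
  · intro hlt
    have ha0 : 0 < a := by
      rcases Nat.eq_zero_or_pos a with h | h
      · exfalso
        rw [h, zero_mul] at ha
        have hpos : 0 < m * (n - m + 1) := Nat.mul_pos (by omega) (by omega)
        omega
      · exact h
    have ha1 : a ≠ 1 := by
      intro h
      rw [h, one_mul] at ha
      have h2 : 2 * (n - m + 1) ≤ m * (n - m + 1) :=
        Nat.mul_le_mul_right _ (by omega)
      have h3 : m * 2 ≤ m * (n - m + 1) :=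
        Nat.mul_le_mul_left _ (by omega)
      omega
    have ha2 : 2 ≤ a := by omega
    have hm4 : 4 ≤ m := by omega
    have haq : a + 2 ≤ m := by omega
    have hab : a * n = m * b := by rw [hb]; exact ha
    exact construction n m a b hm4 hmn hb hab ha2 haq
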